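/- The ideal I of endomorphisms with finite image is a locally finite ring: for every finite subset S of I there exists a finite (nonunital) subring B of End(A) with B ⊆ I and S ⊆ B. -/

import Mathlib

/-- The ideal of finite-image endomorphisms of the countable elementary abelian
`p`-group `ℕ →₀ ZMod p` is a locally finite ring: every finite set of finite-image
endomorphisms is contained in a finite (nonunital) subring consisting of
finite-image endomorphisms. -/
theorem finRange_locally_finite (p : ℕ) [Fact p.Prime]
    (S : Finset (Module.End (ZMod p) (ℕ →₀ ZMod p)))
    (hS : ∀ α ∈ S, (Set.range α).Finite) :
    ∃ B : NonUnitalSubring (Module.End (ZMod p) (ℕ →₀ ZMod p)),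
      (B : Set (Module.End (ZMod p) (ℕ →₀ ZMod p))).Finite ∧
      (∀ β ∈ B, (Set.range β).Finite) ∧
      ∀ α ∈ S, α ∈ B := by
  classical
  set M : Type := ℕ →₀ ZMod p with hM
  set V : Submodule (ZMod p) M :=
    Submodule.span (ZMod p) (⋃ α ∈ S, Set.range α) with hVdef
  have hVfin : (V : Set M).Finite := by
    have hU : (⋃ α ∈ S, Set.range (α : M →ₗ[ZMod p] M) : Set M).Finite :=
      Set.Finite.biUnion S.finite_toSet hS
    have : Module.Finite (ZMod p) V := Module.Finite.span_of_finite _ hU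
    have : Finite V := Module.finite_of_finite (ZMod p)
    exact (V : Set M).toFinite
  have hmemV : ∀ α ∈ S, ∀ m : M, (α : M →ₗ[ZMod p] M) m ∈ V := fun α hα m =>
    Submodule.subset_span (Set.mem_biUnion hα (Set.mem_range_self m))
  haveI : Finite V := hVfin.to_subtype
  haveI : Finite (V →ₗ[ZMod p] V) := Finite.of_injective _ DFunLike.coe_injective
  -- the generating set
  set P2 : Set (Module.End (ZMod p) M) :=
    Set.range (fun x : (V →ₗ[ZMod p] V) × S =>
      V.subtype ∘ₗ x.1 ∘ₗ LinearMap.codRestrict V (x.2 : Module.End (ZMod p) M)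
        (hmemV x.2 x.2.2)) with hP2def
  set P : Set (Module.End (ZMod p) M) := ↑S ∪ P2 with hPdef
  have hPfin : P.Finite := S.finite_toSet.union (Set.finite_range _)
  have hPV : ∀ a ∈ P, ∀ m : M, (a : M →ₗ[ZMod p] M) m ∈ V := by
    rintro a (ha | ⟨⟨f, β⟩, rfl⟩) m
    · exact hmemV a ha m
    · exact (f ((LinearMap.codRestrict V _ (hmemV β β.2)) m)).2
  -- product lemma
  have hmul : ∀ a : Module.End (ZMod p) M, (∀ m : M, a m ∈ V) → ∀ b ∈ P, a * b ∈ P2 := by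
    intro a ha b hb
    have haV : ∀ x ∈ V, a x ∈ V := fun x _ => ha x
    rcases hb with hb | ⟨⟨f, β⟩, rfl⟩
    · refine ⟨⟨a.restrict haV, ⟨b, hb⟩⟩, ?_⟩
      ext m
      rfl
    · refine ⟨⟨(a.restrict haV) ∘ₗ f, β⟩, ?_⟩
      ext m
      rfl
  have hspanV : ∀ x ∈ Submodule.span (ZMod p) P, ∀ m : M, x m ∈ V := by
    intro x hx
    induction hx using Submodule.span_induction with
    | mem a ha => exact hPV a ha
    | zero => exact fun m => V.zero_mem
    | add y z _ _ hy hz => exact fun m => V.add_mem (hy m) (hz m)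
    | smul c y _ hy => exact fun m => V.smul_mem c (hy m)
  have hmulclosed : ∀ x ∈ Submodule.span (ZMod p) P, ∀ y ∈ Submodule.span (ZMod p) P,
      x * y ∈ Submodule.span (ZMod p) P := by
    intro x hx y hy
    induction hy using Submodule.span_induction with
    | mem b hb => exact Submodule.subset_span (Or.inr (hmul x (hspanV x hx) b hb))
    | zero => simp [Submodule.zero_mem]
    | add y z _ _ hy hz => simpa [mul_add] using Submodule.add_mem _ hy hz
    | smul c y _ hy => simpa [mul_smul_comm] using Submodule.smul_mem _ c hy
  refine ⟨{ carrier := Submodule.span (ZMod p) P,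
            add_mem' := fun h h' => Submodule.add_mem _ h h',
            zero_mem' := Submodule.zero_mem _,
            neg_mem' := fun h => Submodule.neg_mem (Submodule.span (ZMod p) P) h,
            mul_mem' := fun {x y} hx hy => hmulclosed x hx y hy }, ?_, ?_, ?_⟩
  · have : Module.Finite (ZMod p) (Submodule.span (ZMod p) P) :=
      Module.Finite.span_of_finite _ hPfin
    have : Finite (Submodule.span (ZMod p) P) := Module.finite_of_finite (ZMod p)
    exact Set.toFinite _
  · intro β hβ
    exact hVfin.subset (Set.range_subset_iff.2 (hspanV β hβ))
  · intro α hα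
    exact Submodule.subset_span (Or.inl hα)
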